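/- Let D be a division ring with center F, K a maximal subfield of D that is algebraic over F with K = F(S) for a subset S ⊆ K, and let a ∈ D \ K be such that S_a := {x ∈ S : a*x ≠ x*a} is finite. Then the division subring K(a) generated by K and a is finite-dimensional over its center, and a is not in the center of K(a). -/

import Mathlib

open Finset
set_option maxHeartbeats 2000000
set_option synthInstance.maxHeartbeats 1000000

namespace Stmt19Proof

/-- Operators of the form `t ↦ ∑ d r * t * c r` with `c r ∈ k`. -/
private def Stmt19Ops {E : Type*} [DivisionRing E] (k : Subfield E) : AddSubgroup (E → E) :=
  AddSubgroup.closure {f | ∃ d c, c ∈ k ∧ f = fun t => d * t * c}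

section Ops
variable {E : Type*} [DivisionRing E] {k : Subfield E}


private theorem gen {E : Type*} [DivisionRing E] (k : Subfield E)
    (d c : E) (hc : c ∈ k) : (fun t => d * t * c) ∈ Stmt19Ops k :=
  AddSubgroup.subset_closure ⟨d, c, hc, rfl⟩

private theorem id_mem {E : Type*} [DivisionRing E] (k : Subfield E) :
    (fun t : E => t) ∈ Stmt19Ops k := by
  have := gen k 1 1 k.one_mem
  simpa using this

private theorem comp_left {E : Type*} [DivisionRing E] {k : Subfield E}
    {f : E → E} (hf : f ∈ Stmt19Ops k) (e : E) : (fun t => e * f t) ∈ Stmt19Ops k := by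
  induction hf using AddSubgroup.closure_induction with
  | mem g hg =>
    obtain ⟨d, c, hc, rfl⟩ := hg
    have := gen k (e * d) c hc
    simpa [mul_assoc] using this
  | zero => convert (Stmt19Ops k).zero_mem using 1; funext t; simp
  | add g h _ _ hg hh =>
    have h2 : (fun t => e * (g + h) t) = (fun t => e * g t) + fun t => e * h t := by
      funext t; simp [mul_add]
    rw [h2]; exact (Stmt19Ops k).add_mem hg hh
  | neg g _ hg =>
    have h2 : (fun t => e * (-g) t) = -fun t => e * g t := by
      funext t; simp [mul_neg]
    rw [h2]; exact (Stmt19Ops k).neg_mem hg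

private theorem comp_right {E : Type*} [DivisionRing E] {k : Subfield E}
    {f : E → E} (hf : f ∈ Stmt19Ops k) {c : E} (hc : c ∈ k) :
    (fun t => f t * c) ∈ Stmt19Ops k := by
  induction hf using AddSubgroup.closure_induction with
  | mem g hg =>
    obtain ⟨d, c', hc', rfl⟩ := hg
    have := gen k d (c' * c) (k.mul_mem hc' hc)
    simpa [mul_assoc] using this
  | zero => convert (Stmt19Ops k).zero_mem using 1; funext t; simp
  | add g h _ _ hg hh =>
    have h2 : (fun t => (g + h) t * c) = (fun t => g t * c) + fun t => h t * c := by
      funext t; simp [add_mul]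
    rw [h2]; exact (Stmt19Ops k).add_mem hg hh
  | neg g _ hg =>
    have h2 : (fun t => (-g) t * c) = -fun t => g t * c := by
      funext t; simp [neg_mul]
    rw [h2]; exact (Stmt19Ops k).neg_mem hg

private theorem sum_mem' {E : Type*} [DivisionRing E] {k : Subfield E}
    {m : ℕ} {f : Fin m → E → E} (hf : ∀ i, f i ∈ Stmt19Ops k) :
    (fun t => ∑ i, f i t) ∈ Stmt19Ops k := by
  have h2 : (fun t => ∑ i, f i t) = ∑ i, f i := by funext t; simp
  rw [h2]; exact AddSubgroup.sum_mem _ fun i _ => hf i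


private theorem density
    (hcent : ∀ x : E, (∀ y ∈ k, x * y = y * x) → x ∈ k) :
    ∀ (m : ℕ) (x : Fin m → E),
      (∀ c : Fin m → E, (∀ i, c i ∈ k) → (∑ i, x i * c i) = 0 → ∀ i, c i = 0) →
      ∀ y : Fin m → E, ∃ f ∈ Stmt19Ops k, ∀ j, f (x j) = y j := by
  intro m
  induction m with
  | zero => exact fun x _ y => ⟨0, (Stmt19Ops k).zero_mem, fun j => j.elim0⟩
  | succ m IH =>
    intro x hx y
    have hx' : ∀ c : Fin m → E, (∀ i, c i ∈ k) →
        (∑ i, x i.castSucc * c i) = 0 → ∀ i, c i = 0 := by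
      intro c hc hsum i
      have hmem : ∀ j : Fin (m+1), (Fin.snoc c (0:E) : Fin (m+1) → E) j ∈ k := by
        intro j
        induction j using Fin.lastCases with
        | last => simpa using k.zero_mem
        | cast i => simpa using hc i
      have h0 : ∑ j : Fin (m+1), x j * (Fin.snoc c (0:E) : Fin (m+1) → E) j = 0 := by
        rw [Fin.sum_univ_castSucc]
        simpa using hsum
      have := hx (Fin.snoc c 0) hmem h0 i.castSucc
      simpa using this
    by_cases hW : ∃ g ∈ Stmt19Ops k, (∀ j : Fin m, g (x j.castSucc) = 0) ∧ g (x (Fin.last m)) ≠ 0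
    · obtain ⟨g, hg, hg0, hgl⟩ := hW
      obtain ⟨f₁, hf₁, hf₁v⟩ := IH (fun i => x i.castSucc) hx' (fun i => y i.castSucc)
      refine ⟨f₁ + fun t => ((y (Fin.last m) - f₁ (x (Fin.last m))) * (g (x (Fin.last m)))⁻¹) * g t,
        (Stmt19Ops k).add_mem hf₁ (comp_left hg _), ?_⟩
      intro j
      simp only [Pi.add_apply]
      induction j using Fin.lastCases with
      | last =>
        rw [mul_assoc, inv_mul_cancel₀ hgl]
        simp
      | cast i =>
        rw [hg0 i]
        simpa using hf₁v i
    · exfalso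
      push_neg at hW
      have claim1 : ∀ g ∈ Stmt19Ops k, ∀ h ∈ Stmt19Ops k,
          (∀ j : Fin m, g (x j.castSucc) = h (x j.castSucc)) →
          g (x (Fin.last m)) = h (x (Fin.last m)) := by
        intro g hg h hh hgh
        have h2 := hW (g - h) ((Stmt19Ops k).sub_mem hg hh)
          (fun j => by simp [Pi.sub_apply, hgh j])
        have h3 : g (x (Fin.last m)) - h (x (Fin.last m)) = 0 := by
          simpa [Pi.sub_apply] using h2
        exact sub_eq_zero.mp h3
      -- the auxiliary operators f_i and elements e_i
      have hfi : ∀ i : Fin m, ∃ f ∈ Stmt19Ops k,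
          ∀ j : Fin m, f (x j.castSucc) = (Pi.single i 1 : Fin m → E) j :=
        fun i => IH (fun j => x j.castSucc) hx' (Pi.single i 1)
      choose f hfOps hfv using hfi
      set e : Fin m → E := fun i => f i (x (Fin.last m)) with he
      have he_mem : ∀ i, e i ∈ k := by
        intro i
        refine hcent _ (fun c hc => ?_)
        have := claim1 (fun t => (f i) t * c) (comp_right (hfOps i) hc)
          (fun t => c * (f i) t) (comp_left (hfOps i) c)
          (fun j => by
            simp only [hfv]
            rcases eq_or_ne j i with rfl | hne
            · simp
            · simp [Pi.single_apply, hne])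
        exact this
      have claim3 : x (Fin.last m) = ∑ i, x i.castSucc * e i := by
        have := claim1 (fun t => t) (id_mem k)
          (fun t => ∑ i, x i.castSucc * f i t)
          (sum_mem' (fun i => comp_left (hfOps i) _))
          (fun j => by
            simp only [hfv]
            rw [Finset.sum_eq_single j]
            · simp
            · intro b _ hbj
              simp [Pi.single_apply, (Ne.symm hbj)]
            · simp)
        simpa using this
      -- contradiction with independence
      have hcoef : ∀ j : Fin (m+1), (Fin.snoc e (-1:E) : Fin (m+1) → E) j ∈ k := by
        intro j
        induction j using Fin.lastCases with
        | last => simpa using k.neg_mem k.one_mem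
        | cast i => simpa using he_mem i
      have hsum : ∑ j : Fin (m+1), x j * (Fin.snoc e (-1:E) : Fin (m+1) → E) j = 0 := by
        rw [Fin.sum_univ_castSucc]
        simp only [Fin.snoc_castSucc, Fin.snoc_last]
        rw [← claim3]
        simp
      have := hx _ hcoef hsum (Fin.last m)
      simp at this


/-- Every operator can be written with a fixed right spanning family. -/
private theorem ops_reduce {Z : Subfield E} {n : ℕ} {b : Fin n → E}
    (hspan : ∀ c ∈ k, ∃ z : Fin n → E, (∀ i, z i ∈ Z) ∧ c = ∑ i, z i * b i)
    (hZc : ∀ z ∈ Z, ∀ t : E, z * t = t * z)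
    {f : E → E} (hf : f ∈ Stmt19Ops k) :
    ∃ w : Fin n → E, ∀ t, f t = ∑ i, w i * t * b i := by
  induction hf using AddSubgroup.closure_induction with
  | mem g hg =>
    obtain ⟨d, c, hc, rfl⟩ := hg
    obtain ⟨z, hz, hcz⟩ := hspan c hc
    subst hcz
    refine ⟨fun i => d * z i, fun t => ?_⟩
    show d * t * (∑ i : Fin n, z i * b i) = _
    rw [Finset.mul_sum]
    refine Finset.sum_congr rfl (fun i _ => ?_)
    show d * t * (z i * b i) = d * z i * t * b i
    rw [mul_assoc d t, ← mul_assoc t, ← hZc (z i) (hz i) t]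
    noncomm_ring
  | zero => exact ⟨0, fun t => by simp⟩
  | add g h _ _ hg hh =>
    obtain ⟨w1, hw1⟩ := hg
    obtain ⟨w2, hw2⟩ := hh
    refine ⟨w1 + w2, fun t => ?_⟩
    simp only [Pi.add_apply, hw1, hw2, add_mul, Finset.sum_add_distrib]
  | neg g _ hg =>
    obtain ⟨w, hw⟩ := hg
    refine ⟨-w, fun t => ?_⟩
    simp only [Pi.neg_apply, hw, neg_mul, Finset.sum_neg_distrib]


private theorem main_span (k Z : Subfield E)
    (hcent : ∀ x : E, (∀ y ∈ k, x * y = y * x) → x ∈ k)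
    (hZc : ∀ z ∈ Z, ∀ t : E, z * t = t * z)
    (n : ℕ) (b : Fin n → E)
    (hspan : ∀ c ∈ k, ∃ z : Fin n → E, (∀ i, z i ∈ Z) ∧ c = ∑ i, z i * b i) :
    ∃ (m : ℕ) (v : Fin m → E),
      ∀ x : E, ∃ z : Fin m → Fin n → E,
        (∀ i j, z i j ∈ Z) ∧ x = ∑ i, ∑ j, z i j * v i * b j := by
  classical
  -- "independent" tuples
  set Indep : ∀ m : ℕ, (Fin m → E) → Prop :=
    fun m x => ∀ c : Fin m → E, (∀ i, c i ∈ k) → (∑ i, x i * c i) = 0 → ∀ i, c i = 0 with hIndep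
  -- no tuple longer than n is independent
  have hbound : ∀ m : ℕ, n < m → ∀ x : Fin m → E, ¬ Indep m x := by
    intro m hm x hx
    have hsurj : Function.Surjective (fun w : Fin n → E => fun j : Fin m => ∑ i, w i * x j * b i) := by
      intro y
      obtain ⟨f, hf, hfv⟩ := density hcent m x hx y
      obtain ⟨w, hw⟩ := ops_reduce hspan hZc hf
      refine ⟨w, funext fun j => ?_⟩
      show ∑ i, w i * x j * b i = y j
      rw [← hw (x j), hfv j]
    -- package as a linear map over E
    let Φ : (Fin n → E) →ₗ[E] (Fin m → E) :=
      { toFun := fun w => fun j => ∑ i, w i * x j * b i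
        map_add' := by
          intro w w'; funext j
          simp [add_mul, Finset.sum_add_distrib]
        map_smul' := by
          intro e w; funext j
          simp only [Pi.smul_apply, smul_eq_mul, RingHom.id_apply]
          rw [Finset.mul_sum]
          exact Finset.sum_congr rfl fun i _ => by noncomm_ring }
    have hr := LinearMap.rank_le_of_surjective Φ hsurj
    rw [rank_fun', rank_fun'] at hr
    simp only [Fintype.card_fin, Nat.cast_le] at hr
    omega
  -- independent tuples of every length ≤ n exist or not; take the largest
  set P : ℕ → Prop := fun m => ∃ x : Fin m → E, Indep m x with hP
  have hP0 : P 0 := ⟨fun i => i.elim0, fun c _ _ i => i.elim0⟩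
  set m₀ := Nat.findGreatest P n with hm₀
  obtain ⟨u, hu⟩ : P m₀ := Nat.findGreatest_spec (Nat.zero_le n) hP0
  -- u spans E over k on the right
  have huspan : ∀ x : E, ∃ κ : Fin m₀ → E, (∀ i, κ i ∈ k) ∧ x = ∑ i, u i * κ i := by
    intro x
    have hdep : ¬ Indep (m₀ + 1) (Fin.snoc u x) := by
      intro hind
      rcases eq_or_lt_of_le (Nat.findGreatest_le (P := P) n : m₀ ≤ n) with heq | hlt
      · exact hbound (m₀ + 1) (by omega) _ hind
      · have : m₀ + 1 ≤ m₀ := Nat.le_findGreatest hlt ⟨_, hind⟩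
        omega
    obtain ⟨c, hck, hcsum, i0, hi0⟩ : ∃ c : Fin (m₀+1) → E, (∀ i, c i ∈ k) ∧
        (∑ i, (Fin.snoc u x : Fin (m₀+1) → E) i * c i) = 0 ∧ ∃ i, c i ≠ 0 := by
      by_contra hcon
      push_neg at hcon
      exact hdep fun c h1 h2 => hcon c h1 h2
    have hlast : c (Fin.last m₀) ≠ 0 := by
      intro h0
      have hc' : ∀ i : Fin m₀, c i.castSucc = 0 := by
        apply hu (fun i => c i.castSucc) (fun i => hck _)
        have := hcsum
        rw [Fin.sum_univ_castSucc] at this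
        simpa [h0] using this
      apply hi0
      induction i0 using Fin.lastCases with
      | last => exact h0
      | cast i => exact hc' i
    refine ⟨fun i => -(c i.castSucc * (c (Fin.last m₀))⁻¹), fun i =>
      k.neg_mem (k.mul_mem (hck _) (k.inv_mem (hck _))), ?_⟩
    have h1 : ∑ i : Fin m₀, u i * c i.castSucc = -(x * c (Fin.last m₀)) := by
      rw [Fin.sum_univ_castSucc] at hcsum
      simp only [Fin.snoc_castSucc, Fin.snoc_last] at hcsum
      exact eq_neg_of_add_eq_zero_left hcsum
    have h2 : x = -((∑ i : Fin m₀, u i * c i.castSucc) * (c (Fin.last m₀))⁻¹) := by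
      rw [h1, neg_mul, neg_neg, mul_assoc, mul_inv_cancel₀ hlast, mul_one]
    rw [h2, Finset.sum_mul, ← Finset.sum_neg_distrib]
    refine Finset.sum_congr rfl (fun i _ => ?_)
    rw [mul_neg, mul_assoc]
  -- combine with the spanning of k over Z
  refine ⟨m₀, u, fun x => ?_⟩
  obtain ⟨κ, hκk, hκ⟩ := huspan x
  choose z hz hzv using fun i => hspan (κ i) (hκk i)
  refine ⟨z, hz, ?_⟩
  rw [hκ]
  refine Finset.sum_congr rfl (fun i _ => ?_)
  rw [hzv i, Finset.mul_sum]
  refine Finset.sum_congr rfl (fun j _ => ?_)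
  rw [← mul_assoc, ← hZc (z i j) (hz i j) (u i), mul_assoc]

end Ops

/-- The centralizer of a set in a division ring, as a subfield. -/
private def Stmt19Cent {D : Type*} [DivisionRing D] (s : Set D) : Subfield D :=
  { Subring.centralizer s with
    inv_mem' := by
      intro x hx
      have hx' : ∀ g ∈ s, g * x = x * g := Subring.mem_centralizer_iff.mp hx
      refine Subring.mem_centralizer_iff.mpr (fun g hg => ?_)
      rcases eq_or_ne x 0 with rfl | hx0
      · simp
      · have h := hx' g hg
        have : x⁻¹ * (g * x) * x⁻¹ = x⁻¹ * (x * g) * x⁻¹ := by rw [h]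
        rw [← mul_assoc, ← mul_assoc, inv_mul_cancel₀ hx0, one_mul, mul_assoc,
          mul_assoc, mul_inv_cancel₀ hx0, mul_one] at this
        exact this.symm }

private theorem Stmt19Cent.mem_iff {D : Type*} [DivisionRing D] {s : Set D} {x : D} :
    x ∈ Stmt19Cent s ↔ ∀ g ∈ s, g * x = x * g := Subring.mem_centralizer_iff

/-- Adjoining a commuting element to a commutative subfield yields a commutative subfield. -/
private theorem Stmt19.closure_comm {D : Type*} [DivisionRing D] (K : Subfield D)
    (hKcomm : ∀ x ∈ K, ∀ y ∈ K, x * y = y * x)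
    (c : D) (hc : ∀ y ∈ K, c * y = y * c) :
    ∀ x ∈ Subfield.closure (↑K ∪ {c}), ∀ y ∈ Subfield.closure (↑K ∪ {c}), x * y = y * x := by
  intro x hx y hy
  have h1 : Subfield.closure (↑K ∪ {c}) ≤ Stmt19Cent {c} := by
    rw [Subfield.closure_le]
    rintro t (ht | rfl)
    · exact Stmt19Cent.mem_iff.mpr (fun g hg => by rw [Set.mem_singleton_iff] at hg; rw [hg]; exact hc t ht)
    · exact Stmt19Cent.mem_iff.mpr (fun g hg => by rw [Set.mem_singleton_iff] at hg; rw [hg])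
  have h2 : Subfield.closure (↑K ∪ {c}) ≤ Stmt19Cent (↑K) := by
    rw [Subfield.closure_le]
    rintro t (ht | rfl)
    · exact Stmt19Cent.mem_iff.mpr (fun g hg => hKcomm g hg t ht)
    · exact Stmt19Cent.mem_iff.mpr (fun g hg => (hc g hg).symm)
  have h3 : Subfield.closure (↑K ∪ {c}) ≤ Stmt19Cent {x} := by
    rw [Subfield.closure_le]
    rintro t (ht | rfl)
    · refine Stmt19Cent.mem_iff.mpr (fun g hg => ?_)
      rw [Set.mem_singleton_iff] at hg; subst hg
      exact (Stmt19Cent.mem_iff.mp (h2 hx) t ht).symm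
    · refine Stmt19Cent.mem_iff.mpr (fun g hg => ?_)
      rw [Set.mem_singleton_iff] at hg; subst hg
      exact (Stmt19Cent.mem_iff.mp (h1 hx) t rfl).symm
  exact Stmt19Cent.mem_iff.mp (h3 hy) x rfl


private theorem Stmt19.span_K_over_F1
    {D : Type*} [DivisionRing D]
    (K : Subring D) (hKdiv : ∀ x ∈ K, x⁻¹ ∈ K)
    (hKcomm : ∀ x ∈ K, ∀ y ∈ K, x * y = y * x)
    (halg : ∀ x ∈ K, IsAlgebraic (Subring.center D) x)
    (S : Set D) (hSK : S ⊆ K) (hFK : Subring.center D ≤ K)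
    (hgen : ∀ K' : Subring D, (∀ x ∈ K', x⁻¹ ∈ K') →
      Subring.center D ≤ K' → S ⊆ K' → K ≤ K')
    (a : D) (hSa : {x ∈ S | a * x ≠ x * a}.Finite) :
    ∃ (n : ℕ) (b : Fin n → D), (∀ i, b i ∈ K) ∧
      ∀ x ∈ K, ∃ z : Fin n → D,
        (∀ i, z i ∈ Subfield.closure ((Subring.center D : Set D) ∪ {x ∈ S | a * x = x * a})) ∧
        x = ∑ i, z i * b i := by
  classical
  set T : Set D := {x ∈ S | a * x = x * a} with hT
  set F₁ : Subfield D := Subfield.closure ((Subring.center D : Set D) ∪ T) with hF₁def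
  let KF : Subfield D := { toSubring := K, inv_mem' := fun {x} hx => hKdiv x hx }
  have hmemKF : ∀ x : D, x ∈ KF ↔ x ∈ K := fun x => Iff.rfl
  have hF₁K : F₁ ≤ KF := by
    rw [hF₁def, Subfield.closure_le]
    rintro t (ht | ht)
    · exact hFK ht
    · exact hSK ht.1
  letI instFieldKF : Field ↥KF :=
    { (inferInstance : DivisionRing ↥KF) with
      mul_comm := fun x y => Subtype.ext (hKcomm _ x.2 _ y.2) }
  set F₁K : Subfield ↥KF := F₁.comap KF.subtype with hF₁Kdef
  set SaK : Set ↥KF := (KF.subtype) ⁻¹' {x ∈ S | a * x ≠ x * a} with hSaKdef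
  haveI hSaKfin : Finite ↥SaK :=
    (hSa.preimage (Set.injOn_of_injective Subtype.val_injective)).to_subtype
  -- the map from the center into F₁K
  have hFmemK : ∀ z : ↥(Subring.center D), (z : D) ∈ K := fun z => hFK z.2
  have hFmemF₁ : ∀ z : ↥(Subring.center D), (z : D) ∈ F₁ := fun z =>
    Subfield.subset_closure (Or.inl z.2)
  let ψ : ↥(Subring.center D) →+* ↥F₁K :=
    { toFun := fun z => ⟨⟨(z : D), hFmemK z⟩,
        Subfield.mem_comap.mpr (hFmemF₁ z)⟩
      map_one' := rfl
      map_mul' := fun _ _ => rfl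
      map_zero' := rfl
      map_add' := fun _ _ => rfl }
  have hψinj : Function.Injective ψ := fun z w h =>
    Subtype.ext (congrArg (fun t : ↥F₁K => ((t : ↥KF) : D)) h)
  -- integrality of the elements of SaK over F₁K
  have hint : ∀ x ∈ SaK, IsIntegral ↥F₁K x := by
    intro x hx
    obtain ⟨p, hp0, hpx⟩ := halg (x : D) x.2
    refine IsAlgebraic.isIntegral ⟨p.map ψ, ?_, ?_⟩
    · exact (Polynomial.map_ne_zero_iff hψinj).mpr hp0
    · have h1 : ((Polynomial.aeval x) (p.map ψ) : ↥KF) =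
          Polynomial.eval₂ ((algebraMap ↥F₁K ↥KF).comp ψ) x p := by
        rw [Polynomial.aeval_def, Polynomial.eval₂_map]
      have h2 := Polynomial.hom_eval₂ p ((algebraMap ↥F₁K ↥KF).comp ψ) KF.subtype x
      have h3 : (KF.subtype.comp ((algebraMap ↥F₁K ↥KF).comp ψ)) =
          algebraMap ↥(Subring.center D) D := RingHom.ext fun z => rfl
      have h4 : KF.subtype ((Polynomial.aeval x) (p.map ψ)) = 0 := by
        rw [h1, h2, h3]
        rw [Polynomial.aeval_def] at hpx
        simpa using hpx
      apply Subtype.val_injective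
      simpa using h4
  -- the adjoin of SaK is everything
  have hadj : IntermediateField.adjoin ↥F₁K SaK = ⊤ := by
    rw [eq_top_iff]
    rintro x -
    set N := IntermediateField.adjoin ↥F₁K SaK with hN
    set N' : Subfield D := Subfield.map KF.subtype N.toSubfield with hN'
    have hmemN' : ∀ y : ↥KF, y ∈ N → (y : D) ∈ N' := fun y hy =>
      Subfield.mem_map.mpr ⟨y, hy, rfl⟩
    have hKN' : K ≤ N'.toSubring := by
      refine hgen N'.toSubring (fun t ht => N'.inv_mem ht) ?_ ?_
      · intro z hz
        have : algebraMap ↥F₁K ↥KF (ψ ⟨z, hz⟩) ∈ N := N.algebraMap_mem _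
        exact hmemN' _ this
      · intro s hs
        by_cases hcomm : a * s = s * a
        · have hsF₁ : s ∈ F₁ := Subfield.subset_closure (Or.inr ⟨hs, hcomm⟩)
          have hsKF : (⟨s, hSK hs⟩ : ↥KF) ∈ F₁K := Subfield.mem_comap.mpr hsF₁
          have : algebraMap ↥F₁K ↥KF ⟨_, hsKF⟩ ∈ N := N.algebraMap_mem _
          exact hmemN' _ this
        · have : (⟨s, hSK hs⟩ : ↥KF) ∈ SaK := by
            simp only [hSaKdef, Set.mem_preimage]
            exact ⟨hs, hcomm⟩
          exact hmemN' _ (IntermediateField.subset_adjoin _ _ this)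
    have hxN' : (x : D) ∈ N' := hKN' x.2
    obtain ⟨y, hy, hyx⟩ := Subfield.mem_map.mp hxN'
    have : y = x := Subtype.ext hyx
    rw [← this]
    exact hy
  haveI hfdadj : FiniteDimensional ↥F₁K ↥(IntermediateField.adjoin ↥F₁K SaK) :=
    IntermediateField.finiteDimensional_adjoin hint
  haveI hfd : FiniteDimensional ↥F₁K ↥KF := by
    rw [hadj] at hfdadj
    exact (IntermediateField.topEquiv (F := ↥F₁K) (E := ↥KF)).toLinearEquiv.finiteDimensional
  obtain ⟨n, bK, hbK⟩ := Module.Finite.exists_fin (R := ↥F₁K) (M := ↥KF)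
  refine ⟨n, fun i => ((bK i : ↥KF) : D), fun i => (bK i).2, ?_⟩
  intro x hx
  have hxspan : (⟨x, hx⟩ : ↥KF) ∈ Submodule.span ↥F₁K (Set.range bK) := by
    rw [hbK]; trivial
  obtain ⟨c, hc⟩ := Submodule.mem_span_range_iff_exists_fun (↥F₁K) |>.mp hxspan
  refine ⟨fun i => (((c i : ↥KF)) : D), fun i => Subfield.mem_comap.mp (c i).2, ?_⟩
  have := congrArg (KF.subtype) hc
  rw [map_sum] at this
  have heach : ∀ i, KF.subtype (c i • bK i) = ((c i : ↥KF) : D) * ((bK i : ↥KF) : D) :=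
    fun i => rfl
  simp only [heach] at this
  exact this.symm


end Stmt19Proof

/-- Let `D` be a division ring with center `F`, `K` a maximal (commutative) subfield of
`D` that is algebraic over `F` and generated over `F` by a subset `S ⊆ K`, and let
`a ∈ D \ K` be such that `S_a = {x ∈ S : a*x ≠ x*a}` is finite. Then the division subring
`K(a)` generated by `K` and `a` is finite-dimensional over its center and `a` is not in
the center of `K(a)`. -/
theorem stmt_19 (D : Type*) [DivisionRing D]
    (K : Subring D) (hKdiv : ∀ x ∈ K, x⁻¹ ∈ K)
    (hKcomm : ∀ x ∈ K, ∀ y ∈ K, x * y = y * x)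
    (hKmax : ∀ K' : Subring D, (∀ x ∈ K', x⁻¹ ∈ K') →
      (∀ x ∈ K', ∀ y ∈ K', x * y = y * x) → K ≤ K' → K' = K)
    (halg : ∀ x ∈ K, IsAlgebraic (Subring.center D) x)
    (S : Set D) (hSK : S ⊆ K) (hFK : Subring.center D ≤ K)
    (hgen : ∀ K' : Subring D, (∀ x ∈ K', x⁻¹ ∈ K') →
      Subring.center D ≤ K' → S ⊆ K' → K ≤ K')
    (a : D) (haK : a ∉ K)
    (hSa : {x ∈ S | a * x ≠ x * a}.Finite) :
    ∃ D₁ : Subring D, (∀ x ∈ D₁, x⁻¹ ∈ D₁) ∧ K ≤ D₁ ∧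
      (∃ ha : a ∈ D₁,
        (∀ D' : Subring D, (∀ x ∈ D', x⁻¹ ∈ D') → K ≤ D' → a ∈ D' → D₁ ≤ D') ∧
        Module.Finite (Subring.center D₁) D₁ ∧
        (⟨a, ha⟩ : D₁) ∉ Subring.center D₁) := by
  classical
  set KF : Subfield D := { toSubring := K, inv_mem' := fun {x} hx => hKdiv x hx } with hKF
  have hKFcoe : (KF : Set D) = (K : Set D) := rfl
  have hKFcomm : ∀ x ∈ KF, ∀ y ∈ KF, x * y = y * x := hKcomm
  set E : Subfield D := Subfield.closure ((K : Set D) ∪ {a}) with hE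
  have hKE : ∀ x ∈ K, x ∈ E := fun x hx => Subfield.subset_closure (Or.inl hx)
  have haE : a ∈ E := Subfield.subset_closure (Or.inr rfl)
  -- the key fact from maximality: anything commuting with K lies in K
  have hcentK : ∀ c : D, (∀ y ∈ K, c * y = y * c) → c ∈ K := by
    intro c hc
    have hcomm' := Stmt19Proof.Stmt19.closure_comm KF hKFcomm c hc
    have heq := hKmax (Subfield.closure ((KF : Set D) ∪ {c})).toSubring
      (fun x hx => Subfield.inv_mem _ hx)
      (fun x hx y hy => hcomm' x hx y hy)
      (fun x hx => Subfield.subset_closure (Or.inl hx))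
    have hcmem : c ∈ (Subfield.closure ((KF : Set D) ∪ {c})).toSubring :=
      Subfield.subset_closure (Or.inr rfl)
    rw [heq] at hcmem
    exact hcmem
  refine ⟨E.toSubring, fun x hx => E.inv_mem hx, fun x hx => hKE x hx, haE, ?_, ?_, ?_⟩
  · -- minimality
    intro D' hinv hKD' haD'
    have hle : E ≤ { toSubring := D', inv_mem' := fun {x} hx => hinv x hx } := by
      rw [hE, Subfield.closure_le]
      rintro t (ht | rfl)
      · exact hKD' ht
      · exact haD'
    exact fun x hx => hle hx
  · -- central finiteness
    set T : Set D := {x ∈ S | a * x = x * a} with hT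
    set F₁ : Subfield D := Subfield.closure ((Subring.center D : Set D) ∪ T) with hF₁def
    have hF₁K : F₁ ≤ KF := by
      rw [hF₁def, Subfield.closure_le]
      rintro t (ht | ht)
      · exact hFK ht
      · exact hSK ht.1
    have hF₁a : ∀ z ∈ F₁, z * a = a * z := by
      intro z hz
      have : F₁ ≤ Stmt19Proof.Stmt19Cent {a} := by
        rw [hF₁def, Subfield.closure_le]
        rintro t (ht | ht)
        · exact Stmt19Proof.Stmt19Cent.mem_iff.mpr fun g hg => by
            rw [Set.mem_singleton_iff.mp hg]
            exact (Subring.mem_center_iff.mp ht) a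
        · exact Stmt19Proof.Stmt19Cent.mem_iff.mpr fun g hg => by
            rw [Set.mem_singleton_iff.mp hg]
            exact ht.2
      exact (Stmt19Proof.Stmt19Cent.mem_iff.mp (this hz) a rfl).symm
    have hF₁E : ∀ z ∈ F₁, ∀ t ∈ E, z * t = t * z := by
      intro z hz
      have hle : E ≤ Stmt19Proof.Stmt19Cent {z} := by
        rw [hE, Subfield.closure_le]
        rintro t (ht | rfl)
        · exact Stmt19Proof.Stmt19Cent.mem_iff.mpr fun g hg => by
            rw [Set.mem_singleton_iff.mp hg]
            exact hKcomm z (hF₁K hz) t ht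
        · exact Stmt19Proof.Stmt19Cent.mem_iff.mpr fun g hg => by
            rw [Set.mem_singleton_iff.mp hg]
            exact (hF₁a z hz)
      intro t ht
      exact Stmt19Proof.Stmt19Cent.mem_iff.mp (hle ht) z rfl
    have hF₁E' : ∀ z ∈ F₁, z ∈ E := fun z hz => hKE z (hF₁K hz)
    obtain ⟨n, b, hbK, hspanD⟩ :=
      Stmt19Proof.Stmt19.span_K_over_F1 K hKdiv hKcomm halg S hSK hFK hgen a hSa
    -- move to the division ring ↥E
    set k' : Subfield ↥E := KF.comap E.subtype with hk'
    set Z' : Subfield ↥E := F₁.comap E.subtype with hZ'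
    have hmemk' : ∀ x : ↥E, x ∈ k' ↔ (x : D) ∈ K := fun x => Iff.rfl
    have hmemZ' : ∀ x : ↥E, x ∈ Z' ↔ (x : D) ∈ F₁ := fun x => Iff.rfl
    have hcent' : ∀ x : ↥E, (∀ y ∈ k', x * y = y * x) → x ∈ k' := by
      intro x hx
      refine (hmemk' x).mpr (hcentK (x : D) (fun y hy => ?_))
      have := hx ⟨y, hKE y hy⟩ ((hmemk' _).mpr hy)
      exact congrArg Subtype.val this
    have hZc' : ∀ z ∈ Z', ∀ t : ↥E, z * t = t * z := by
      intro z hz t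
      exact Subtype.ext (hF₁E (z : D) ((hmemZ' z).mp hz) (t : D) t.2)
    set b' : Fin n → ↥E := fun i => ⟨b i, hKE _ (hbK i)⟩ with hb'
    have hspan' : ∀ c ∈ k', ∃ z : Fin n → ↥E, (∀ i, z i ∈ Z') ∧ c = ∑ i, z i * b' i := by
      intro c hc
      obtain ⟨z, hz, hzeq⟩ := hspanD (c : D) ((hmemk' c).mp hc)
      refine ⟨fun i => ⟨z i, hF₁E' _ (hz i)⟩, fun i => (hmemZ' _).mpr (hz i), ?_⟩
      apply Subtype.ext
      rw [hzeq]
      exact (map_sum E.subtype (fun i => (⟨z i, hF₁E' _ (hz i)⟩ : ↥E) * b' i) Finset.univ).symm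
    obtain ⟨m, v, hv⟩ := Stmt19Proof.main_span k' Z' hcent' hZc' n b' hspan'
    -- translate back to D-level data
    have hvD : ∀ x : D, x ∈ E → ∃ z : Fin m → Fin n → D,
        (∀ i j, z i j ∈ F₁) ∧ x = ∑ i, ∑ j, z i j * (v i : D) * b j := by
      intro x hx
      obtain ⟨z, hz, hzeq⟩ := hv ⟨x, hx⟩
      refine ⟨fun i j => (z i j : D), fun i j => (hmemZ' _).mp (hz i j), ?_⟩
      have h0 : x = ((∑ i, ∑ j, z i j * v i * b' j : ↥E) : D) :=
        congrArg (fun t : ↥E => (t : D)) hzeq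
      have h1 : ((∑ i, ∑ j, z i j * v i * b' j : ↥E) : D) =
          ∑ i, ∑ j, ((z i j : D) * (v i : D) * b j) :=
        (map_sum E.subtype _ _).trans
          (Finset.sum_congr rfl fun i _ => map_sum E.subtype _ _)
      exact h0.trans h1
    -- package as Module.Finite
    rw [Module.finite_def, Submodule.fg_def]
    refine ⟨Set.range (fun p : Fin m × Fin n =>
        (⟨(v p.1 : D) * b p.2, (Subfield.mul_mem E (v p.1).2 (hKE _ (hbK p.2)) : _)⟩ :
          ↥E.toSubring)), Set.finite_range _, ?_⟩
    rw [eq_top_iff]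
    rintro ⟨x, hx⟩ -
    obtain ⟨z, hz, hzeq⟩ := hvD x hx
    have hzE : ∀ i j, z i j ∈ E.toSubring := fun i j => hF₁E' _ (hz i j)
    have hzc : ∀ i j, (⟨z i j, hzE i j⟩ : ↥E.toSubring) ∈ Subring.center ↥E.toSubring := by
      intro i j
      exact Subring.mem_center_iff.mpr fun g =>
        Subtype.ext ((hF₁E _ (hz i j) _ g.2).symm)
    have hxeq : (⟨x, hx⟩ : ↥E.toSubring) = ∑ i, ∑ j,
        (⟨z i j, hzE i j⟩ : ↥E.toSubring) *
          ⟨(v i : D) * b j, Subfield.mul_mem E (v i).2 (hKE _ (hbK j))⟩ := by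
      apply Subtype.ext
      have h1 : ((∑ i, ∑ j, (⟨z i j, hzE i j⟩ : ↥E.toSubring) *
          ⟨(v i : D) * b j, Subfield.mul_mem E (v i).2 (hKE _ (hbK j))⟩ : ↥E.toSubring) : D) =
          ∑ i, ∑ j, (z i j * ((v i : D) * b j)) :=
        (map_sum E.toSubring.subtype _ _).trans
          (Finset.sum_congr rfl fun i _ => map_sum E.toSubring.subtype _ _)
      have h2 : ∑ i, ∑ j, (z i j * ((v i : D) * b j)) =
          ∑ i, ∑ j, z i j * (v i : D) * b j :=
        Finset.sum_congr rfl fun i _ => Finset.sum_congr rfl fun j _ => (mul_assoc _ _ _).symm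
      exact (hzeq.trans (h2.symm)).trans h1.symm
    rw [hxeq]
    refine Submodule.sum_mem _ fun i _ => Submodule.sum_mem _ fun j _ => ?_
    have hsmul : (⟨z i j, hzE i j⟩ : ↥E.toSubring) *
        ⟨(v i : D) * b j, Subfield.mul_mem E (v i).2 (hKE _ (hbK j))⟩ =
        (⟨⟨z i j, hzE i j⟩, hzc i j⟩ : Subring.center ↥E.toSubring) •
        ⟨(v i : D) * b j, Subfield.mul_mem E (v i).2 (hKE _ (hbK j))⟩ := rfl
    rw [hsmul]
    exact Submodule.smul_mem _ _ (Submodule.subset_span ⟨(i, j), rfl⟩)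
  · -- a is not central in D₁
    intro hcen
    have hcomm_a : ∀ y ∈ K, a * y = y * a := by
      intro y hy
      have := Subring.mem_center_iff.mp hcen ⟨y, hKE y hy⟩
      exact (congrArg Subtype.val this).symm
    exact haK (hcentK a hcomm_a)
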